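/- A graph G has a mixed dominating set of size at most k if and only if the incidence graph I(G) (the 1-subdivision of G) has a distance-2 dominating set of size at most k. -/
import Mathlib


variable {V : Type*} [Fintype V] [DecidableEq V]

/-- The set of endpoints of an edge set `M`, i.e. `V(M)`. -/
def mVerts (M : Finset (Sym2 V)) : Finset V :=
  Finset.univ.filter fun v => ∃ e ∈ M, v ∈ e

/-- `D ∪ M` is a mixed dominating set of `G`: every vertex outside `D ∪ V(M)` has a
neighbor in `D`, and every edge outside `M` has an endpoint in `D ∪ V(M)`. -/
def IsMDS (G : SimpleGraph V) (D : Finset V) (M : Finset (Sym2 V)) : Prop :=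
  (∀ e ∈ M, e ∈ G.edgeSet) ∧
  (∀ v : V, v ∉ D → v ∉ mVerts M → ∃ u ∈ D, G.Adj u v) ∧
  (∀ e ∈ G.edgeSet, e ∉ M → ∃ v, v ∈ e ∧ (v ∈ D ∨ v ∈ mVerts M))

/-- The incidence graph (1-subdivision) of `G`: vertices are `V ⊕ Sym2 V`, with
`v` adjacent to `e` iff `e` is an edge of `G` and `v` is an endpoint of `e`.
(Elements of `Sym2 V` that are not edges of `G` are isolated junk vertices.) -/
def incGraph {V : Type*} (G : SimpleGraph V) : SimpleGraph (V ⊕ Sym2 V) :=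
  SimpleGraph.fromRel fun x y =>
    ∃ v e, x = Sum.inl v ∧ y = Sum.inr e ∧ e ∈ G.edgeSet ∧ v ∈ e

/-- `x` is within distance 2 of `s` in `H`. -/
def within2 {α : Type*} (H : SimpleGraph α) (s x : α) : Prop :=
  s = x ∨ H.Adj s x ∨ ∃ y, H.Adj s y ∧ H.Adj y x

lemma inc_adj {V : Type*} {G : SimpleGraph V} {v : V} {e : Sym2 V} :
    (incGraph G).Adj (Sum.inl v) (Sum.inr e) ↔ e ∈ G.edgeSet ∧ v ∈ e := by
  simp [incGraph, SimpleGraph.fromRel_adj]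

lemma inc_adj' {V : Type*} {G : SimpleGraph V} {v : V} {e : Sym2 V} :
    (incGraph G).Adj (Sum.inr e) (Sum.inl v) ↔ e ∈ G.edgeSet ∧ v ∈ e := by
  rw [SimpleGraph.adj_comm]; exact inc_adj

lemma not_ll {V : Type*} {G : SimpleGraph V} {u v : V} :
    ¬ (incGraph G).Adj (Sum.inl u) (Sum.inl v) := by
  simp [incGraph, SimpleGraph.fromRel_adj]

lemma not_rr {V : Type*} {G : SimpleGraph V} {e f : Sym2 V} :
    ¬ (incGraph G).Adj (Sum.inr e) (Sum.inr f) := by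
  simp [incGraph, SimpleGraph.fromRel_adj]

/-- `G` has a mixed dominating set of size at most `k` iff the incidence graph
`I(G)` has a distance-2 dominating set of size at most `k`. -/
theorem stmt10 (G : SimpleGraph V) (k : ℕ) :
    (∃ (D : Finset V) (M : Finset (Sym2 V)), IsMDS G D M ∧ D.card + M.card ≤ k) ↔
    (∃ S : Finset (V ⊕ Sym2 V),
      (∀ x ∈ S, ∀ e : Sym2 V, x = Sum.inr e → e ∈ G.edgeSet) ∧
      (∀ v : V, ∃ s ∈ S, within2 (incGraph G) s (Sum.inl v)) ∧
      (∀ e ∈ G.edgeSet, ∃ s ∈ S, within2 (incGraph G) s (Sum.inr e)) ∧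
      S.card ≤ k) := by
  constructor
  · rintro ⟨D, M, ⟨hM, hVd, hEd⟩, hcard⟩
    refine ⟨D.image Sum.inl ∪ M.image Sum.inr, ?_, ?_, ?_, ?_⟩
    · intro x hx e hxe
      simp only [Finset.mem_union, Finset.mem_image] at hx
      rcases hx with ⟨d, _, hd⟩ | ⟨m, hm, hmeq⟩
      · exact absurd (hd.trans hxe) (by simp)
      · rw [hxe] at hmeq
        obtain rfl : m = e := by simpa using hmeq
        exact hM _ hm
    · intro v
      by_cases hvD : v ∈ D
      · exact ⟨Sum.inl v, by simp [hvD], Or.inl rfl⟩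
      by_cases hvM : v ∈ mVerts M
      · simp only [mVerts, Finset.mem_filter] at hvM
        obtain ⟨-, e, heM, hve⟩ := hvM
        exact ⟨Sum.inr e, by simp [heM], Or.inr (Or.inl (inc_adj'.2 ⟨hM e heM, hve⟩))⟩
      · obtain ⟨u, huD, hadj⟩ := hVd v hvD hvM
        refine ⟨Sum.inl u, by simp [huD], Or.inr (Or.inr ⟨Sum.inr s(u,v), ?_, ?_⟩)⟩
        · exact inc_adj.2 ⟨G.mem_edgeSet.2 hadj, by simp⟩
        · exact inc_adj'.2 ⟨G.mem_edgeSet.2 hadj, by simp⟩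
    · intro e he
      by_cases heM : e ∈ M
      · exact ⟨Sum.inr e, by simp [heM], Or.inl rfl⟩
      · obtain ⟨v, hve, hv⟩ := hEd e he heM
        rcases hv with hvD | hvM
        · exact ⟨Sum.inl v, by simp [hvD], Or.inr (Or.inl (inc_adj.2 ⟨he, hve⟩))⟩
        · simp only [mVerts, Finset.mem_filter] at hvM
          obtain ⟨-, f, hfM, hvf⟩ := hvM
          exact ⟨Sum.inr f, by simp [hfM],
            Or.inr (Or.inr ⟨Sum.inl v, inc_adj'.2 ⟨hM f hfM, hvf⟩, inc_adj.2 ⟨he, hve⟩⟩)⟩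
    · calc (D.image Sum.inl ∪ M.image Sum.inr).card
          ≤ (D.image Sum.inl).card + (M.image Sum.inr).card := Finset.card_union_le _ _
        _ ≤ D.card + M.card := add_le_add Finset.card_image_le Finset.card_image_le
        _ ≤ k := hcard
  · rintro ⟨S, h1, hVd, hEd, hcard⟩
    set D : Finset V := Finset.univ.filter (fun v => Sum.inl v ∈ S) with hD
    set M : Finset (Sym2 V) := Finset.univ.filter (fun e => Sum.inr e ∈ S) with hMdef
    have hDmem : ∀ v, v ∈ D ↔ Sum.inl v ∈ S := by intro v; simp [hD]
    have hMmem : ∀ e, e ∈ M ↔ Sum.inr e ∈ S := by intro e; simp [hMdef]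
    refine ⟨D, M, ⟨?_, ?_, ?_⟩, ?_⟩
    · intro e heM
      exact h1 _ ((hMmem e).1 heM) e rfl
    · intro v hvD hvM
      obtain ⟨s, hsS, hw⟩ := hVd v
      rcases s with u | e
      · rcases hw with heq | hadj | ⟨y, hy1, hy2⟩
        · have huv : u = v := by simpa using heq
          exact absurd ((hDmem v).2 (huv ▸ hsS)) hvD
        · exact absurd hadj not_ll
        · rcases y with w | e
          · exact absurd hy1 not_ll
          · obtain ⟨hedge, hue⟩ := inc_adj.1 hy1
            obtain ⟨-, hve⟩ := inc_adj'.1 hy2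
            by_cases huv : u = v
            · exact absurd ((hDmem v).2 (huv ▸ hsS)) hvD
            · have : e = s(u, v) := ((Sym2.mem_and_mem_iff huv).1 ⟨hue, hve⟩)
              exact ⟨u, (hDmem u).2 hsS, G.mem_edgeSet.1 (this ▸ hedge)⟩
      · rcases hw with heq | hadj | ⟨y, hy1, hy2⟩
        · exact absurd heq (by simp)
        · obtain ⟨-, hve⟩ := inc_adj'.1 hadj
          exact absurd (by simp [mVerts]; exact ⟨e, (hMmem e).2 hsS, hve⟩) hvM
        · rcases y with w | f
          · exact absurd hy2 not_ll
          · exact absurd hy1 not_rr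
    · intro e he heM
      obtain ⟨s, hsS, hw⟩ := hEd e he
      rcases s with u | f
      · rcases hw with heq | hadj | ⟨y, hy1, hy2⟩
        · exact absurd heq (by simp)
        · exact ⟨u, (inc_adj.1 hadj).2, Or.inl ((hDmem u).2 hsS)⟩
        · rcases y with w | f
          · exact absurd hy1 not_ll
          · exact absurd hy2 not_rr
      · rcases hw with heq | hadj | ⟨y, hy1, hy2⟩
        · have hfe : f = e := by simpa using heq
          exact absurd ((hMmem e).2 (hfe ▸ hsS)) heM
        · exact absurd hadj not_rr
        · rcases y with u | g
          · obtain ⟨hfedge, huf⟩ := inc_adj'.1 hy1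
            obtain ⟨-, hue⟩ := inc_adj.1 hy2
            refine ⟨u, hue, Or.inr ?_⟩
            simp only [mVerts, Finset.mem_filter]
            exact ⟨Finset.mem_univ _, f, (hMmem f).2 hsS, huf⟩
          · exact absurd hy1 not_rr
    · have hsub : D.image Sum.inl ∪ M.image Sum.inr ⊆ S := by
        intro x hx
        simp only [Finset.mem_union, Finset.mem_image] at hx
        rcases hx with ⟨v, hv, rfl⟩ | ⟨e, he, rfl⟩
        · exact (hDmem v).1 hv
        · exact (hMmem e).1 he
      have hdisj : Disjoint (D.image Sum.inl) (M.image Sum.inr) := by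
        rw [Finset.disjoint_left]
        rintro x hx hx'
        simp only [Finset.mem_image] at hx hx'
        obtain ⟨v, -, rfl⟩ := hx
        obtain ⟨e, -, h⟩ := hx'
        exact absurd h (by simp)
      calc D.card + M.card
          = (D.image Sum.inl).card + (M.image Sum.inr).card := by
            rw [Finset.card_image_of_injective _ Sum.inl_injective,
              Finset.card_image_of_injective _ Sum.inr_injective]
        _ = (D.image Sum.inl ∪ M.image Sum.inr).card :=
            (Finset.card_union_of_disjoint hdisj).symm
        _ ≤ S.card := Finset.card_le_card hsub
        _ ≤ k := hcard
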